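/- arXiv:2202.10296 — 2 statements merged into one kernel-verified Lean document; each statement's English description precedes it below -/
import Mathlib

section
/- For independent nonnegative integer-valued random variables X and Y, ρ(X+Y) ≤ max(ρ(X), ρ(Y)), where ρ(X) = inf{α ∈ [0,1] : X ∈ M_α}. -/
open scoped BigOperators

/-- `IsPMF p` : `p` is a probability mass function on `ℕ`. -/
def IsPMF (p : ℕ → ℝ) : Prop :=
  (∀ n, 0 ≤ p n) ∧ HasSum p 1

/-- Binomial `α`-thinning at the level of distributions:
`thin α p k = P(α ∘ X = k)` when `X` has pmf `p`. -/
noncomputable def thin (α : ℝ) (p : ℕ → ℝ) (k : ℕ) : ℝ :=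
  ∑' n : ℕ, (n.choose k : ℝ) * α ^ k * (1 - α) ^ (n - k) * p n

/-- Convolution of two pmfs on `ℕ` (law of the sum of independent variables). -/
noncomputable def conv (p q : ℕ → ℝ) (n : ℕ) : ℝ :=
  ∑ k ∈ Finset.range (n + 1), p k * q (n - k)

/-- `MemM α p` : the distribution `p` is an `α`-thinned distribution, i.e. `p ∈ M_α`. -/
def MemM (α : ℝ) (p : ℕ → ℝ) : Prop :=
  ∃ q : ℕ → ℝ, IsPMF q ∧ ∀ k, p k = thin α q k

/-- `rho p` : the minimal thinning parameter `ρ(X)`. -/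
noncomputable def rho (p : ℕ → ℝ) : ℝ :=
  sInf {α : ℝ | α ∈ Set.Icc (0:ℝ) 1 ∧ MemM α p}

section Aux

open Finset

noncomputable def cterm (α : ℝ) (n k : ℕ) : ℝ :=
  (n.choose k : ℝ) * α ^ k * (1 - α) ^ (n - k)

lemma cterm_nonneg {α : ℝ} (h0 : 0 ≤ α) (h1 : α ≤ 1) (n k : ℕ) : 0 ≤ cterm α n k :=
  mul_nonneg (mul_nonneg (Nat.cast_nonneg _) (pow_nonneg h0 _))
    (pow_nonneg (by linarith) _)

lemma binom_sum (x y : ℝ) (N : ℕ) :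
    ∑ j ∈ range (N + 1), (N.choose j : ℝ) * x ^ j * y ^ (N - j) = (x + y) ^ N := by
  rw [add_pow]
  exact Finset.sum_congr rfl fun j _ => by ring

lemma cterm_row_sum (α : ℝ) (n : ℕ) :
    ∑ k ∈ range (n + 1), cterm α n k = 1 := by
  have h : α + (1 - α) = 1 := by ring
  calc ∑ k ∈ range (n + 1), cterm α n k
      = (α + (1 - α)) ^ n := binom_sum α (1 - α) n
    _ = 1 := by rw [h, one_pow]

lemma cterm_eq_zero_of_lt {α : ℝ} {n k : ℕ} (h : n < k) : cterm α n k = 0 := by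
  simp [cterm, Nat.choose_eq_zero_of_lt h]

lemma cterm_hasSum_row (α : ℝ) (n : ℕ) : HasSum (fun k => cterm α n k) 1 := by
  have h := hasSum_sum_of_ne_finset_zero (L := SummationFilter.unconditional ℕ) (s := range (n + 1))
      (f := fun k => cterm α n k) (fun k hk => cterm_eq_zero_of_lt (by simpa using hk))
  rwa [cterm_row_sum] at h

lemma cterm_le_one {α : ℝ} (h0 : 0 ≤ α) (h1 : α ≤ 1) (n k : ℕ) : cterm α n k ≤ 1 := by
  rcases le_or_gt k n with h | h
  · calc cterm α n k ≤ ∑ j ∈ range (n + 1), cterm α n j :=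
        Finset.single_le_sum (fun j _ => cterm_nonneg h0 h1 n j)
          (Finset.mem_range.2 (Nat.lt_succ_of_le h))
    _ = 1 := cterm_row_sum α n
  · rw [cterm_eq_zero_of_lt h]; norm_num

lemma thin_eq (α : ℝ) (q : ℕ → ℝ) (k : ℕ) : thin α q k = ∑' n, cterm α n k * q n := rfl

lemma summable_cterm_mul {α : ℝ} (h0 : 0 ≤ α) (h1 : α ≤ 1) {q : ℕ → ℝ}
    (hq : IsPMF q) (k : ℕ) : Summable (fun n => cterm α n k * q n) := by
  refine Summable.of_nonneg_of_le
    (fun n => mul_nonneg (cterm_nonneg h0 h1 n k) (hq.1 n)) (fun n => ?_) hq.2.summable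
  calc cterm α n k * q n ≤ 1 * q n :=
      mul_le_mul_of_nonneg_right (cterm_le_one h0 h1 n k) (hq.1 n)
  _ = q n := one_mul _

lemma hasSum_thin {α : ℝ} (h0 : 0 ≤ α) (h1 : α ≤ 1) {q : ℕ → ℝ} (hq : IsPMF q) (k : ℕ) :
    HasSum (fun n => cterm α n k * q n) (thin α q k) :=
  (summable_cterm_mul h0 h1 hq k).hasSum

lemma thin_isPMF {α : ℝ} (h0 : 0 ≤ α) (h1 : α ≤ 1) {q : ℕ → ℝ} (hq : IsPMF q) :
    IsPMF (thin α q) := by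
  constructor
  · intro k
    rw [thin_eq]
    exact tsum_nonneg fun n => mul_nonneg (cterm_nonneg h0 h1 n k) (hq.1 n)
  · set F : ℕ × ℕ → ℝ := fun x => cterm α x.1 x.2 * q x.1 with hF
    have hFnn : 0 ≤ F := fun x => mul_nonneg (cterm_nonneg h0 h1 _ _) (hq.1 _)
    have hrow : ∀ n, HasSum (fun k => F (n, k)) (q n) := by
      intro n
      simpa using (cterm_hasSum_row α n).mul_right (q n)
    have hFsum : Summable F := by
      refine (summable_prod_of_nonneg hFnn).2 ⟨fun n => (hrow n).summable, ?_⟩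
      exact (summable_congr fun n => ((hrow n).tsum_eq)).2 hq.2.summable
    have hF1 : HasSum F 1 := by
      obtain ⟨s, hs⟩ := hFsum
      have := hs.prod_fiberwise hrow
      rwa [this.unique hq.2] at hs
    have hswap : HasSum (fun x : ℕ × ℕ => F (x.2, x.1)) 1 :=
      ((Equiv.prodComm ℕ ℕ).hasSum_iff (f := F) (a := 1)).2 hF1
    exact hswap.prod_fiberwise fun k => hasSum_thin h0 h1 hq k

lemma thin_one (q : ℕ → ℝ) (k : ℕ) : thin 1 q k = q k := by
  rw [thin_eq, tsum_eq_single k]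
  · simp [cterm]
  · intro n hn
    rcases lt_or_gt_of_ne hn with h | h
    · simp [cterm, Nat.choose_eq_zero_of_lt h]
    · have : n - k ≠ 0 := by omega
      simp [cterm, zero_pow this]

lemma key_ident (α β : ℝ) (n k : ℕ) :
    ∑ m ∈ range (n + 1), cterm α m k * cterm β n m = cterm (α * β) n k := by
  rcases lt_or_ge n k with h | hkn
  · rw [cterm_eq_zero_of_lt h]
    refine Finset.sum_eq_zero fun m hm => ?_
    have hmk : m < k := lt_of_lt_of_le (Finset.mem_range.1 hm) (by omega)
    rw [cterm_eq_zero_of_lt hmk, zero_mul]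
  · have h1 : ∑ m ∈ range (n + 1), cterm α m k * cterm β n m
        = ∑ m ∈ Ico k (n + 1), cterm α m k * cterm β n m := by
      refine (Finset.sum_subset (fun m hm => Finset.mem_range.2 ?_) (fun m hm hm' => ?_)).symm
      · exact (Finset.mem_Ico.1 hm).2
      · have : m < k := by
          rcases Finset.mem_range.1 hm with h'
          by_contra hc
          exact hm' (Finset.mem_Ico.2 ⟨le_of_not_gt hc, h'⟩)
        rw [cterm_eq_zero_of_lt this, zero_mul]
    rw [h1, Finset.sum_Ico_eq_sum_range]
    have h2 : n + 1 - k = (n - k) + 1 := by omega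
    rw [h2]
    have h3 : ∀ j ∈ range ((n - k) + 1),
        cterm α (k + j) k * cterm β n (k + j)
          = ((n.choose k : ℝ) * (α * β) ^ k) *
            (((n - k).choose j : ℝ) * ((1 - α) * β) ^ j * (1 - β) ^ ((n - k) - j)) := by
      intro j hj
      have hjN : j ≤ n - k := by simpa [Nat.lt_succ_iff] using hj
      have hkjn : k + j ≤ n := by omega
      have hc := Nat.choose_mul (n := n) (Nat.le_add_right k j)
      have hc' : ((n.choose (k + j) : ℕ) : ℝ) * ((k + j).choose k : ℕ)
          = (n.choose k : ℕ) * ((n - k).choose j : ℕ) := by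
        rw_mod_cast [hc]
        congr 2
        omega
      push_cast at hc'
      have e1 : k + j - k = j := by omega
      have e2 : n - (k + j) = (n - k) - j := by omega
      rw [cterm, cterm, e1, e2, pow_add, mul_pow, mul_pow]
      linear_combination (α ^ k * (1 - α) ^ j * β ^ k * β ^ j * (1 - β) ^ ((n - k) - j)) * hc'
    rw [Finset.sum_congr rfl h3, ← Finset.mul_sum, binom_sum]
    have h4 : (1 - α) * β + (1 - β) = 1 - α * β := by ring
    rw [h4, cterm]

lemma key_ident2 (α : ℝ) (n a b : ℕ) :
    ∑ j ∈ range (n + 1), cterm α a j * cterm α b (n - j) = cterm α (a + b) n := by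
  have hv : ((a + b).choose n : ℝ)
      = ∑ j ∈ range (n + 1), (a.choose j : ℝ) * (b.choose (n - j)) := by
    rw_mod_cast [Nat.add_choose_eq a b n,
      Finset.Nat.sum_antidiagonal_eq_sum_range_succ (fun x y => a.choose x * b.choose y)]
  rw [cterm, hv, Finset.sum_mul, Finset.sum_mul]
  refine Finset.sum_congr rfl fun j hj => ?_
  have hjn : j ≤ n := by simpa [Nat.lt_succ_iff] using hj
  rcases le_or_gt j a with hja | hja
  · rcases le_or_gt (n - j) b with hjb | hjb
    · have e1 : α ^ n = α ^ j * α ^ (n - j) := by rw [← pow_add]; congr 1; omega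
      have e2 : (1 - α) ^ (a + b - n) = (1 - α) ^ (a - j) * (1 - α) ^ (b - (n - j)) := by
        rw [← pow_add]; congr 1; omega
      rw [cterm, cterm, e1, e2]; ring
    · rw [cterm_eq_zero_of_lt hjb]
      simp [Nat.choose_eq_zero_of_lt hjb]
  · rw [cterm_eq_zero_of_lt hja]
    simp [Nat.choose_eq_zero_of_lt hja]

lemma thin_thin {α β : ℝ} (hα0 : 0 ≤ α) (hα1 : α ≤ 1) (hβ0 : 0 ≤ β) (hβ1 : β ≤ 1)
    {q : ℕ → ℝ} (hq : IsPMF q) (k : ℕ) :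
    thin α (thin β q) k = thin (α * β) q k := by
  have hαβ0 : 0 ≤ α * β := mul_nonneg hα0 hβ0
  have hαβ1 : α * β ≤ 1 := by nlinarith
  set G : ℕ × ℕ → ℝ := fun x => cterm β x.1 x.2 * q x.1 * cterm α x.2 k with hG
  have hGnn : 0 ≤ G := fun x =>
    mul_nonneg (mul_nonneg (cterm_nonneg hβ0 hβ1 _ _) (hq.1 _)) (cterm_nonneg hα0 hα1 _ _)
  have hrow : ∀ n, HasSum (fun m => G (n, m)) (cterm (α * β) n k * q n) := by
    intro n
    have hz : ∀ m ∉ range (n + 1), G (n, m) = 0 := by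
      intro m hm
      have : cterm β n m = 0 := cterm_eq_zero_of_lt (by simpa using hm)
      simp [hG, this]
    have h := hasSum_sum_of_ne_finset_zero (L := SummationFilter.unconditional ℕ) hz
    have hsum : ∑ m ∈ range (n + 1), G (n, m) = cterm (α * β) n k * q n := by
      rw [← key_ident α β n k, Finset.sum_mul]
      exact Finset.sum_congr rfl fun m _ => by simp only [hG]; ring
    rwa [hsum] at h
  have hGsum : Summable G := by
    refine (summable_prod_of_nonneg hGnn).2 ⟨fun n => (hrow n).summable, ?_⟩
    exact (summable_congr fun n => (hrow n).tsum_eq).2 (summable_cterm_mul hαβ0 hαβ1 hq k)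
  obtain ⟨S, hS⟩ := hGsum
  have h1 : HasSum (fun n => cterm (α * β) n k * q n) S := hS.prod_fiberwise hrow
  have hSval : S = thin (α * β) q k := h1.unique (hasSum_thin hαβ0 hαβ1 hq k)
  have hcol : ∀ m, HasSum (fun n => G (n, m)) (thin β q m * cterm α m k) := fun m =>
    (hasSum_thin hβ0 hβ1 hq m).mul_right (cterm α m k)
  have hswap : HasSum (fun x : ℕ × ℕ => G (x.2, x.1)) S :=
    ((Equiv.prodComm ℕ ℕ).hasSum_iff (f := G)).2 hS
  have h2 : HasSum (fun m => thin β q m * cterm α m k) S := hswap.prod_fiberwise hcol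
  have h3 : HasSum (fun m => cterm α m k * thin β q m) S := by
    simpa [mul_comm] using h2
  rw [thin_eq, ← hSval]
  exact h3.tsum_eq

lemma hasSum_antidiagonal_group {F : ℕ × ℕ → ℝ} {S : ℝ} (h : HasSum F S) :
    HasSum (fun m => ∑ x ∈ Finset.HasAntidiagonal.antidiagonal m, F x) S := by
  have h' : HasSum (fun x : Σ n : ℕ, (Finset.HasAntidiagonal.antidiagonal n : Finset (ℕ × ℕ)) =>
      F (Finset.HasAntidiagonal.sigmaAntidiagonalEquivProd x)) S :=
    (Equiv.hasSum_iff _).2 h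
  refine h'.sigma fun m => ?_
  have := hasSum_fintype (fun c : (Finset.HasAntidiagonal.antidiagonal m : Finset (ℕ × ℕ)) => F ↑c)
  simpa [Finset.sum_attach] using this

lemma conv_isPMF {p q : ℕ → ℝ} (hp : IsPMF p) (hq : IsPMF q) : IsPMF (conv p q) := by
  constructor
  · intro n
    exact Finset.sum_nonneg fun k _ => mul_nonneg (hp.1 k) (hq.1 (n - k))
  · have hpq : Summable (fun x : ℕ × ℕ => p x.1 * q x.2) :=
      hp.2.summable.mul_of_nonneg hq.2.summable hp.1 hq.1
    have hm : HasSum (fun x : ℕ × ℕ => p x.1 * q x.2) 1 := by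
      simpa using hp.2.mul hq.2 hpq
    have h := hasSum_antidiagonal_group hm
    have he : (fun m => ∑ x ∈ Finset.HasAntidiagonal.antidiagonal m, p x.1 * q x.2) = conv p q := by
      funext m
      exact Finset.Nat.sum_antidiagonal_eq_sum_range_succ (fun a b => p a * q b) m
    rwa [he] at h

lemma conv_thin {α : ℝ} (h0 : 0 ≤ α) (h1 : α ≤ 1) {p q : ℕ → ℝ}
    (hp : IsPMF p) (hq : IsPMF q) (n : ℕ) :
    conv (thin α p) (thin α q) n = thin α (conv p q) n := by
  set H : ℕ × ℕ → ℝ := fun x => cterm α (x.1 + x.2) n * (p x.1 * q x.2) with hHdef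
  have hpq : Summable (fun x : ℕ × ℕ => p x.1 * q x.2) :=
    hp.2.summable.mul_of_nonneg hq.2.summable hp.1 hq.1
  have hHnn : ∀ x, 0 ≤ H x := fun x =>
    mul_nonneg (cterm_nonneg h0 h1 _ _) (mul_nonneg (hp.1 _) (hq.1 _))
  have hHsum : Summable H := by
    refine Summable.of_nonneg_of_le hHnn (fun x => ?_) hpq
    calc H x ≤ 1 * (p x.1 * q x.2) :=
        mul_le_mul_of_nonneg_right (cterm_le_one h0 h1 _ _)
          (mul_nonneg (hp.1 _) (hq.1 _))
    _ = p x.1 * q x.2 := one_mul _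
  obtain ⟨S, hS⟩ := hHsum
  have hgrp := hasSum_antidiagonal_group hS
  have hfib : ∀ m, ∑ x ∈ Finset.HasAntidiagonal.antidiagonal m, H x = cterm α m n * conv p q m := by
    intro m
    have hc : ∀ x ∈ Finset.HasAntidiagonal.antidiagonal m, H x = cterm α m n * (p x.1 * q x.2) := by
      intro x hx
      rw [Finset.HasAntidiagonal.mem_antidiagonal] at hx
      simp only [hHdef, hx]
    rw [Finset.sum_congr rfl hc, ← Finset.mul_sum,
      Finset.Nat.sum_antidiagonal_eq_sum_range_succ (fun a b => p a * q b) m]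
    rfl
  have hR : HasSum (fun m => cterm α m n * conv p q m) S := by
    rwa [funext hfib] at hgrp
  have hRv : thin α (conv p q) n = S := by
    rw [thin_eq]
    exact hR.tsum_eq
  have hsummable : ∀ j, Summable fun x : ℕ × ℕ =>
      (cterm α x.1 j * p x.1) * (cterm α x.2 (n - j) * q x.2) := fun j =>
    (hasSum_thin h0 h1 hp j).summable.mul_of_nonneg
      (hasSum_thin h0 h1 hq (n - j)).summable
      (fun m => mul_nonneg (cterm_nonneg h0 h1 _ _) (hp.1 _))
      (fun m => mul_nonneg (cterm_nonneg h0 h1 _ _) (hq.1 _))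
  have hterm : ∀ j, thin α p j * thin α q (n - j)
      = ∑' x : ℕ × ℕ, (cterm α x.1 j * p x.1) * (cterm α x.2 (n - j) * q x.2) := by
    intro j
    exact ((hasSum_thin h0 h1 hp j).mul (hasSum_thin h0 h1 hq (n - j)) (hsummable j)).tsum_eq.symm
  have hptw : ∀ x : ℕ × ℕ,
      ∑ j ∈ Finset.range (n + 1), (cterm α x.1 j * p x.1) * (cterm α x.2 (n - j) * q x.2)
        = H x := by
    intro x
    have hc : ∀ j ∈ Finset.range (n + 1),
        (cterm α x.1 j * p x.1) * (cterm α x.2 (n - j) * q x.2)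
          = (cterm α x.1 j * cterm α x.2 (n - j)) * (p x.1 * q x.2) := fun j _ => by ring
    rw [Finset.sum_congr rfl hc, ← Finset.sum_mul, key_ident2]
  calc conv (thin α p) (thin α q) n
      = ∑ j ∈ Finset.range (n + 1), thin α p j * thin α q (n - j) := rfl
    _ = ∑ j ∈ Finset.range (n + 1),
          ∑' x : ℕ × ℕ, (cterm α x.1 j * p x.1) * (cterm α x.2 (n - j) * q x.2) :=
        Finset.sum_congr rfl fun j _ => hterm j
    _ = ∑' x : ℕ × ℕ, ∑ j ∈ Finset.range (n + 1),
          (cterm α x.1 j * p x.1) * (cterm α x.2 (n - j) * q x.2) :=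
        (Summable.tsum_finsetSum fun j _ => hsummable j).symm
    _ = ∑' x : ℕ × ℕ, H x := tsum_congr hptw
    _ = S := hS.tsum_eq
    _ = thin α (conv p q) n := hRv.symm

lemma memM_one {p : ℕ → ℝ} (hp : IsPMF p) : MemM 1 p :=
  ⟨p, hp, fun k => (thin_one p k).symm⟩

lemma memM_mono {α γ : ℝ} (hα0 : 0 ≤ α) (hγ0 : 0 < γ) (hγ1 : γ ≤ 1) (hle : α ≤ γ)
    {p : ℕ → ℝ} (h : MemM α p) : MemM γ p := by
  obtain ⟨q, hq, hpq⟩ := h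
  have hδ0 : 0 ≤ α / γ := div_nonneg hα0 hγ0.le
  have hδ1 : α / γ ≤ 1 := (div_le_one hγ0).2 hle
  refine ⟨thin (α / γ) q, thin_isPMF hδ0 hδ1 hq, fun k => ?_⟩
  have h2 : thin γ (thin (α / γ) q) k = thin (γ * (α / γ)) q k :=
    thin_thin hγ0.le hγ1 hδ0 hδ1 hq k
  have h3 : γ * (α / γ) = α := by field_simp
  rw [hpq k, h2, h3]

lemma memM_conv {γ : ℝ} (hγ0 : 0 ≤ γ) (hγ1 : γ ≤ 1) {p q : ℕ → ℝ}
    (hP : MemM γ p) (hQ : MemM γ q) : MemM γ (conv p q) := by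
  obtain ⟨p', hp', h1⟩ := hP
  obtain ⟨q', hq', h2⟩ := hQ
  refine ⟨conv p' q', conv_isPMF hp' hq', fun n => ?_⟩
  have he : conv p q n = conv (thin γ p') (thin γ q') n := by
    unfold conv
    exact Finset.sum_congr rfl fun k _ => by rw [h1, h2]
  rw [he, conv_thin hγ0 hγ1 hp' hq' n]

end Aux

/-- `ρ(X+Y) ≤ max(ρ(X), ρ(Y))` for independent `X, Y`. -/
theorem stmt_7 (p q : ℕ → ℝ) (hp : IsPMF p) (hq : IsPMF q) :
    rho (conv p q) ≤ max (rho p) (rho q) := by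
  have h1p : (1:ℝ) ∈ {α : ℝ | α ∈ Set.Icc (0:ℝ) 1 ∧ MemM α p} :=
    ⟨⟨zero_le_one, le_refl 1⟩, memM_one hp⟩
  have h1q : (1:ℝ) ∈ {α : ℝ | α ∈ Set.Icc (0:ℝ) 1 ∧ MemM α q} :=
    ⟨⟨zero_le_one, le_refl 1⟩, memM_one hq⟩
  have h1c : (1:ℝ) ∈ {α : ℝ | α ∈ Set.Icc (0:ℝ) 1 ∧ MemM α (conv p q)} :=
    ⟨⟨zero_le_one, le_refl 1⟩, memM_one (conv_isPMF hp hq)⟩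
  have hbddp : BddBelow {α : ℝ | α ∈ Set.Icc (0:ℝ) 1 ∧ MemM α p} :=
    ⟨0, fun x hx => hx.1.1⟩
  have hbddq : BddBelow {α : ℝ | α ∈ Set.Icc (0:ℝ) 1 ∧ MemM α q} :=
    ⟨0, fun x hx => hx.1.1⟩
  have hbddc : BddBelow {α : ℝ | α ∈ Set.Icc (0:ℝ) 1 ∧ MemM α (conv p q)} :=
    ⟨0, fun x hx => hx.1.1⟩
  have hrp0 : 0 ≤ rho p := le_csInf ⟨1, h1p⟩ fun x hx => hx.1.1
  refine le_of_forall_gt_imp_ge_of_dense fun γ hγ => ?_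
  rcases le_or_gt 1 γ with h | h
  · exact le_trans (csInf_le hbddc h1c) h
  · have hγ0 : 0 < γ := lt_of_le_of_lt (le_trans hrp0 (le_max_left _ _)) hγ
    have hsp : rho p < γ := lt_of_le_of_lt (le_max_left _ _) hγ
    have hsq : rho q < γ := lt_of_le_of_lt (le_max_right _ _) hγ
    obtain ⟨a, haS, haγ⟩ := exists_lt_of_csInf_lt ⟨1, h1p⟩ hsp
    obtain ⟨b, hbS, hbγ⟩ := exists_lt_of_csInf_lt ⟨1, h1q⟩ hsq
    have hPγ : MemM γ p := memM_mono haS.1.1 hγ0 h.le haγ.le haS.2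
    have hQγ : MemM γ q := memM_mono hbS.1.1 hγ0 h.le hbγ.le hbS.2
    exact csInf_le hbddc ⟨⟨hγ0.le, h.le⟩, memM_conv hγ0.le h.le hPγ hQγ⟩
end

section
/- Let X be a nonnegative integer-valued random variable with bounded support. Then ρ(X) = 1 (i.e., X is not an α-thinned distribution for any α < 1) if and only if the support of X contains a hole, i.e., there exists n ≥ 1 with P(X=n) > 0 = P(X=n−1). -/
open scoped BigOperators

-- binomial pmf term ≤ 1
lemma binom_le_one {α : ℝ} (h0 : 0 ≤ α) (h1 : α ≤ 1) (m k : ℕ) :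
    (m.choose k : ℝ) * α ^ k * (1 - α) ^ (m - k) ≤ 1 := by
  by_cases hkm : k ≤ m
  · have hnn : ∀ j ∈ Finset.range (m+1), 0 ≤ α ^ j * (1-α) ^ (m-j) * (m.choose j : ℝ) := by
      intro j _
      have : (0:ℝ) ≤ 1 - α := by linarith
      positivity
    calc (m.choose k : ℝ) * α ^ k * (1 - α) ^ (m - k)
        = α ^ k * (1-α) ^ (m-k) * (m.choose k : ℝ) := by ring
      _ ≤ ∑ j ∈ Finset.range (m+1), α ^ j * (1-α) ^ (m-j) * (m.choose j : ℝ) :=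
          Finset.single_le_sum hnn (Finset.mem_range.2 (Nat.lt_succ_of_le hkm))
      _ = (α + (1-α)) ^ m := (add_pow α (1-α) m).symm
      _ = 1 := by norm_num
  · simp [Nat.choose_eq_zero_of_lt (lt_of_not_ge hkm)]

lemma thin_summable {α : ℝ} (h0 : 0 ≤ α) (h1 : α ≤ 1) {q : ℕ → ℝ} (hq : IsPMF q) (k : ℕ) :
    Summable (fun m => (m.choose k : ℝ) * α ^ k * (1 - α) ^ (m - k) * q m) := by
  have hnn : ∀ m, 0 ≤ (m.choose k : ℝ) * α ^ k * (1 - α) ^ (m - k) * q m := by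
    intro m
    have : (0:ℝ) ≤ 1 - α := by linarith
    have := hq.1 m
    positivity
  have hle : ∀ m, (m.choose k : ℝ) * α ^ k * (1 - α) ^ (m - k) * q m ≤ q m := by
    intro m
    have hb := binom_le_one h0 h1 m k
    calc (m.choose k : ℝ) * α ^ k * (1 - α) ^ (m - k) * q m ≤ 1 * q m :=
          mul_le_mul_of_nonneg_right hb (hq.1 m)
      _ = q m := one_mul _
  exact Summable.of_nonneg_of_le hnn hle hq.2.summable

lemma thin_one_eq (p : ℕ → ℝ) (k : ℕ) : thin 1 p k = p k := by
  unfold thin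
  rw [tsum_eq_single k]
  · simp
  · intro n hn
    rcases lt_or_gt_of_ne hn with h | h
    · simp [Nat.choose_eq_zero_of_lt h]
    · have : n - k ≠ 0 := Nat.sub_ne_zero_of_lt h
      simp [this]

lemma not_memM_of_hole {p : ℕ → ℝ} (n : ℕ) (hn : 1 ≤ n) (hpn : 0 < p n)
    (hpn1 : p (n-1) = 0) {α : ℝ} (h0 : 0 ≤ α) (h1 : α < 1) : ¬ MemM α p := by
  rintro ⟨q, hq, hthin⟩
  rcases eq_or_lt_of_le h0 with h0' | h0'
  · -- α = 0
    have : p n = 0 := by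
      rw [hthin n]
      unfold thin
      have : ∀ m : ℕ, (m.choose n : ℝ) * α ^ n * (1 - α) ^ (m - n) * q m = 0 := by
        intro m
        rw [← h0']
        have : (0:ℝ) ^ n = 0 := zero_pow (by omega)
        simp [this]
      simp [this]
    linarith
  · -- 0 < α
    set f : ℕ → ℝ := fun m => (m.choose n : ℝ) * α ^ n * (1 - α) ^ (m - n) * q m with hf
    have hfs : Summable f := thin_summable h0 h1.le hq n
    have hfn : ∀ m, 0 ≤ f m := by
      intro m
      have : (0:ℝ) ≤ 1 - α := by linarith
      have := hq.1 m
      positivity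
    have hpn' : p n = ∑' m, f m := hthin n
    have : ∃ m, f m ≠ 0 := by
      by_contra hc
      push_neg at hc
      have : p n = 0 := by
        rw [hpn']
        simp [funext hc]
      linarith
    obtain ⟨m, hm⟩ := this
    have hnm : n ≤ m := by
      by_contra hc
      push_neg at hc
      exact hm (by simp [hf, Nat.choose_eq_zero_of_lt hc])
    have hqm : 0 < q m := by
      rcases lt_or_eq_of_le (hq.1 m) with h | h
      · exact h
      · exact absurd (by simp [hf, ← h]) hm
    set g : ℕ → ℝ := fun m' => (m'.choose (n-1) : ℝ) * α ^ (n-1) * (1 - α) ^ (m' - (n-1)) * q m' with hg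
    have hgs : Summable g := thin_summable h0 h1.le hq (n-1)
    have hgn : ∀ m', 0 ≤ g m' := by
      intro m'
      have : (0:ℝ) ≤ 1 - α := by linarith
      have := hq.1 m'
      positivity
    have hgm : 0 < g m := by
      have hc : 0 < (m.choose (n-1) : ℝ) := by
        exact_mod_cast Nat.choose_pos (le_trans (Nat.sub_le n 1) hnm)
      have h1α : (0:ℝ) < 1 - α := by linarith
      have := hq.1 m
      positivity
    have : g m ≤ p (n-1) := by
      rw [hthin (n-1)]
      exact Summable.le_tsum hgs m (fun j _ => hgn j)
    rw [hpn1] at this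
    linarith

lemma choose_le_two_pow' (k j : ℕ) : k.choose j ≤ 2 ^ k := by
  by_cases h : j ≤ k
  · calc k.choose j ≤ ∑ i ∈ Finset.range (k+1), k.choose i :=
        Finset.single_le_sum (fun i _ => Nat.zero_le _) (Finset.mem_range.2 (Nat.lt_succ_of_le h))
      _ = 2 ^ k := Nat.sum_range_choose k
  · simp [Nat.choose_eq_zero_of_lt (lt_of_not_ge h)]

-- the key alternating-sum identity
lemma key_identity (ε : ℝ) (M k m : ℕ) (hm : m ≤ M) :
    ∑ n ∈ Finset.range (M+1),
      (n.choose k : ℝ) * ε ^ (n-k) * ((m.choose n : ℝ) * (-ε) ^ (m-n))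
      = if m = k then 1 else 0 := by
  by_cases hkm : k ≤ m
  · have hsub : Finset.Icc k m ⊆ Finset.range (M+1) := by
      intro n hn
      rw [Finset.mem_Icc] at hn
      exact Finset.mem_range.2 (by omega)
    rw [← Finset.sum_subset hsub]
    · have hIcc : Finset.Icc k m = Finset.Ico k (m+1) := by
        rw [Finset.Ico_add_one_right_eq_Icc]
      rw [hIcc, Finset.sum_Ico_eq_sum_range]
      have hd : m + 1 - k = (m - k) + 1 := by omega
      rw [hd]
      have hterm : ∀ j ∈ Finset.range ((m-k)+1),
          ((k+j).choose k : ℝ) * ε ^ (k+j-k) * ((m.choose (k+j) : ℝ) * (-ε) ^ (m-(k+j)))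
          = (m.choose k : ℝ) * (ε ^ j * (-ε) ^ ((m-k)-j) * ((m-k).choose j : ℝ)) := by
        intro j hj
        rw [Finset.mem_range] at hj
        have hjm : k + j ≤ m := by omega
        have hcc : (m.choose (k+j)) * ((k+j).choose k) = m.choose k * ((m-k).choose (k+j-k)) :=
          Nat.choose_mul (Nat.le_add_right k j)
        have h1 : k + j - k = j := by omega
        have h2 : m - (k+j) = (m-k) - j := by omega
        rw [h1] at hcc ⊢
        rw [h2]
        have : ((k+j).choose k : ℝ) * (m.choose (k+j) : ℝ) = (m.choose k : ℝ) * ((m-k).choose j : ℝ) := by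
          exact_mod_cast congrArg (Nat.cast (R := ℝ)) (by rw [Nat.mul_comm] at hcc; exact hcc)
        calc ((k+j).choose k : ℝ) * ε ^ j * ((m.choose (k+j) : ℝ) * (-ε) ^ ((m-k)-j))
            = (((k+j).choose k : ℝ) * (m.choose (k+j) : ℝ)) * (ε ^ j * (-ε) ^ ((m-k)-j)) := by ring
          _ = ((m.choose k : ℝ) * ((m-k).choose j : ℝ)) * (ε ^ j * (-ε) ^ ((m-k)-j)) := by rw [this]
          _ = (m.choose k : ℝ) * (ε ^ j * (-ε) ^ ((m-k)-j) * ((m-k).choose j : ℝ)) := by ring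
      rw [Finset.sum_congr rfl hterm, ← Finset.mul_sum, ← add_pow ε (-ε) (m-k)]
      have : ε + -ε = 0 := by ring
      rw [this]
      by_cases hmk : m = k
      · subst hmk
        simp
      · have : m - k ≠ 0 := by omega
        rw [zero_pow this]
        simp [hmk]
    · intro n hn hn'
      rw [Finset.mem_Icc] at hn'
      push_neg at hn'
      by_cases h : n < k
      · simp [Nat.choose_eq_zero_of_lt h]
      · have : m < n := hn' (by omega)
        simp [Nat.choose_eq_zero_of_lt this]
  · rw [Finset.sum_eq_zero, if_neg (by omega)]
    intro n _
    by_cases h : n < k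
    · simp [Nat.choose_eq_zero_of_lt h]
    · have : m < n := by omega
      simp [Nat.choose_eq_zero_of_lt this]

lemma memM_of_full (p : ℕ → ℝ) (hp : IsPMF p) (M : ℕ)
    (hpos : ∀ k, k ≤ M → 0 < p k) (hzero : ∀ k, M < k → p k = 0) :
    ∃ α : ℝ, 0 ≤ α ∧ α < 1 ∧ MemM α p := by
  have hps : ∑ k ∈ Finset.range (M+1), p k = 1 := by
    have h1 : HasSum p (∑ k ∈ Finset.range (M+1), p k) :=
      hasSum_sum_of_ne_finset_zero (fun b hb => hzero b (by
        rw [Finset.mem_range] at hb; omega))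
    exact (h1.unique hp.2)
  -- choose ε
  have hne : (Finset.range (M+1)).Nonempty := ⟨0, by simp⟩
  set c : ℝ := (Finset.range (M+1)).inf' hne p with hc
  have hc0 : 0 < c := by
    rw [hc, Finset.lt_inf'_iff]
    intro b hb
    exact hpos b (by rw [Finset.mem_range] at hb; omega)
  have hcle : ∀ j, j ≤ M → c ≤ p j := by
    intro j hj
    exact Finset.inf'_le p (Finset.mem_range.2 (by omega))
  set ε : ℝ := min 1 (c / 2 ^ M) with hεdef
  have hε0 : 0 < ε := lt_min one_pos (div_pos hc0 (pow_pos two_pos M))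
  have hε1 : ε ≤ 1 := min_le_left _ _
  have hεc : ∀ j, j ≤ M → ε * 2 ^ M ≤ p j := by
    intro j hj
    have h1 : ε ≤ c / 2 ^ M := min_le_right _ _
    have h2 : ε * 2 ^ M ≤ c := by
      rw [div_eq_mul_inv] at h1
      have := mul_le_mul_of_nonneg_right h1 (le_of_lt (pow_pos (two_pos (α := ℝ)) M))
      calc ε * 2 ^ M ≤ c * (2 ^ M)⁻¹ * 2 ^ M := this
        _ = c := by field_simp
    exact le_trans h2 (hcle j hj)
  set α : ℝ := 1 / (1 + ε) with hαdef
  have h1ε : (0:ℝ) < 1 + ε := by linarith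
  have h1εne : (1:ℝ) + ε ≠ 0 := ne_of_gt h1ε
  have hα0 : 0 < α := by positivity
  have hα1 : α < 1 := by
    rw [hαdef, div_lt_one h1ε]; linarith
  have hαε : α * (1 + ε) = 1 := by
    rw [hαdef]; field_simp
  have h1α : (1 - α) * (1 + ε) = ε := by
    rw [hαdef]; field_simp; ring
  -- define q
  set q : ℕ → ℝ := fun j =>
    (1+ε)^j * ∑ k ∈ Finset.range (M+1), (k.choose j : ℝ) * (-ε) ^ (k-j) * p k with hqdef
  have hqz : ∀ j, M < j → q j = 0 := by
    intro j hj
    rw [hqdef]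
    simp only
    rw [Finset.sum_eq_zero, mul_zero]
    intro k hk
    rw [Finset.mem_range] at hk
    simp [Nat.choose_eq_zero_of_lt (by omega : k < j)]
  -- nonnegativity of q
  have hqnn : ∀ j, 0 ≤ q j := by
    intro j
    by_cases hj : j ≤ M
    · rw [hqdef]
      simp only
      apply mul_nonneg (by positivity)
      set f : ℕ → ℝ := fun k => (k.choose j : ℝ) * (-ε) ^ (k-j) * p k with hfdef
      have hmem : j ∈ Finset.range (M+1) := Finset.mem_range.2 (by omega)
      rw [← Finset.add_sum_erase _ f hmem]
      have hfj : f j = p j := by simp [hfdef]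
      have hbound : ∀ k ∈ (Finset.range (M+1)).erase j, -(ε * 2 ^ M * p k) ≤ f k := by
        intro k hk
        obtain ⟨hkj, hkr⟩ := Finset.mem_erase.1 hk
        rw [Finset.mem_range] at hkr
        by_cases hlt : k < j
        · rw [hfdef]
          simp only [Nat.choose_eq_zero_of_lt hlt]
          push_cast
          have : (0:ℝ) ≤ ε * 2 ^ M * p k := by
            have := hp.1 k
            positivity
          simp
          linarith
        · have hjk : j < k := by omega
          have habs : |f k| ≤ ε * 2 ^ M * p k := by
            rw [hfdef]
            simp only
            rw [abs_mul, abs_mul]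
            have h1 : |((k.choose j : ℝ))| = (k.choose j : ℝ) := abs_of_nonneg (by positivity)
            have h2 : |(-ε) ^ (k-j)| = ε ^ (k-j) := by
              rw [abs_pow, abs_neg, abs_of_nonneg hε0.le]
            have h3 : |p k| = p k := abs_of_nonneg (hp.1 k)
            rw [h1, h2, h3]
            have hc1 : (k.choose j : ℝ) ≤ 2 ^ M := by
              calc (k.choose j : ℝ) ≤ (2:ℝ) ^ k := by exact_mod_cast choose_le_two_pow' k j
                _ ≤ 2 ^ M := by
                  apply pow_le_pow_right₀ (by norm_num)
                  omega
            have hc2 : ε ^ (k-j) ≤ ε := by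
              calc ε ^ (k-j) ≤ ε ^ 1 := pow_le_pow_of_le_one hε0.le hε1 (by omega)
                _ = ε := pow_one ε
            calc (k.choose j : ℝ) * ε ^ (k-j) * p k ≤ 2 ^ M * ε * p k := by
                  apply mul_le_mul_of_nonneg_right _ (hp.1 k)
                  apply mul_le_mul hc1 hc2 (by positivity) (by positivity)
              _ = ε * 2 ^ M * p k := by ring
          have := neg_abs_le (f k)
          linarith
      have hsum_ge : ∑ k ∈ (Finset.range (M+1)).erase j, f k ≥ -(ε * 2 ^ M) := by
        calc ∑ k ∈ (Finset.range (M+1)).erase j, f k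
            ≥ ∑ k ∈ (Finset.range (M+1)).erase j, -(ε * 2 ^ M * p k) :=
              Finset.sum_le_sum hbound
          _ = -(ε * 2 ^ M * ∑ k ∈ (Finset.range (M+1)).erase j, p k) := by
              rw [Finset.mul_sum]
              exact Finset.sum_neg_distrib _
          _ ≥ -(ε * 2 ^ M * 1) := by
              apply neg_le_neg
              apply mul_le_mul_of_nonneg_left _ (by positivity)
              rw [← hps]
              apply Finset.sum_le_sum_of_subset_of_nonneg (Finset.erase_subset _ _)
              intro i _ _
              exact hp.1 i
          _ = -(ε * 2 ^ M) := by ring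
      have := hεc j hj
      rw [hfj]
      linarith
    · rw [hqz j (by omega)]
  -- sum of q is 1
  have hq1 : ∑ j ∈ Finset.range (M+1), q j = 1 := by
    rw [hqdef]
    simp only
    calc ∑ j ∈ Finset.range (M+1), (1+ε)^j *
          ∑ k ∈ Finset.range (M+1), (k.choose j : ℝ) * (-ε) ^ (k-j) * p k
        = ∑ j ∈ Finset.range (M+1), ∑ k ∈ Finset.range (M+1),
            (1+ε)^j * ((k.choose j : ℝ) * (-ε) ^ (k-j) * p k) := by
          apply Finset.sum_congr rfl
          intro j _
          rw [Finset.mul_sum]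
      _ = ∑ k ∈ Finset.range (M+1), ∑ j ∈ Finset.range (M+1),
            (1+ε)^j * ((k.choose j : ℝ) * (-ε) ^ (k-j) * p k) := Finset.sum_comm
      _ = ∑ k ∈ Finset.range (M+1), p k := by
          apply Finset.sum_congr rfl
          intro k hk
          rw [Finset.mem_range] at hk
          have hsub : Finset.range (k+1) ⊆ Finset.range (M+1) :=
            Finset.range_subset_range.2 (by omega)
          rw [← Finset.sum_subset hsub]
          · have : ∀ j ∈ Finset.range (k+1),
                (1+ε)^j * ((k.choose j : ℝ) * (-ε) ^ (k-j) * p k)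
                = ((1+ε)^j * (-ε)^(k-j) * (k.choose j : ℝ)) * p k := by
              intro j _
              ring
            rw [Finset.sum_congr rfl this, ← Finset.sum_mul, ← add_pow (1+ε) (-ε) k]
            norm_num
          · intro j _ hj'
            rw [Finset.mem_range] at hj'
            simp [Nat.choose_eq_zero_of_lt (by omega : k < j)]
      _ = 1 := hps
  have hqpmf : IsPMF q := by
    constructor
    · exact hqnn
    · have := hasSum_sum_of_ne_finset_zero (L := SummationFilter.unconditional ℕ) (f := q) (s := Finset.range (M+1))
        (fun b hb => hqz b (by rw [Finset.mem_range] at hb; omega))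
      rwa [hq1] at this
  refine ⟨α, hα0.le, hα1, q, hqpmf, ?_⟩
  intro k
  -- thin α q k = p k
  have hterm0 : ∀ n, n ∉ Finset.range (M+1) →
      (n.choose k : ℝ) * α ^ k * (1 - α) ^ (n - k) * q n = 0 := by
    intro n hn
    rw [Finset.mem_range] at hn
    rw [hqz n (by omega), mul_zero]
  unfold thin
  rw [tsum_eq_sum hterm0]
  symm
  -- pointwise simplification
  have hpoint : ∀ n, (n.choose k : ℝ) * α ^ k * (1 - α) ^ (n-k) * (1+ε)^n
      = (n.choose k : ℝ) * ε ^ (n-k) := by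
    intro n
    by_cases hkn : k ≤ n
    · have hsplit : (1+ε)^n = (1+ε)^k * (1+ε)^(n-k) := by
        rw [← pow_add]
        congr 1
        omega
      calc (n.choose k : ℝ) * α ^ k * (1 - α) ^ (n-k) * (1+ε)^n
          = (n.choose k : ℝ) * ((α * (1+ε)) ^ k * ((1-α) * (1+ε)) ^ (n-k)) := by
            rw [hsplit, mul_pow, mul_pow]; ring
        _ = (n.choose k : ℝ) * ε ^ (n-k) := by rw [hαε, h1α, one_pow, one_mul]
    · simp [Nat.choose_eq_zero_of_lt (by omega : n < k)]
  calc ∑ n ∈ Finset.range (M+1), (n.choose k : ℝ) * α ^ k * (1 - α) ^ (n - k) * q n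
      = ∑ n ∈ Finset.range (M+1), ∑ m ∈ Finset.range (M+1),
          (n.choose k : ℝ) * ε ^ (n-k) * ((m.choose n : ℝ) * (-ε) ^ (m-n) * p m) := by
        apply Finset.sum_congr rfl
        intro n _
        rw [hqdef]
        simp only
        calc (n.choose k : ℝ) * α ^ k * (1 - α) ^ (n - k) *
              ((1+ε)^n * ∑ m ∈ Finset.range (M+1), (m.choose n : ℝ) * (-ε) ^ (m-n) * p m)
            = ((n.choose k : ℝ) * α ^ k * (1 - α) ^ (n-k) * (1+ε)^n) *
              ∑ m ∈ Finset.range (M+1), (m.choose n : ℝ) * (-ε) ^ (m-n) * p m := by ring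
          _ = ((n.choose k : ℝ) * ε ^ (n-k)) *
              ∑ m ∈ Finset.range (M+1), (m.choose n : ℝ) * (-ε) ^ (m-n) * p m := by
                rw [hpoint n]
          _ = ∑ m ∈ Finset.range (M+1),
              (n.choose k : ℝ) * ε ^ (n-k) * ((m.choose n : ℝ) * (-ε) ^ (m-n) * p m) := by
                rw [Finset.mul_sum]
    _ = ∑ m ∈ Finset.range (M+1), ∑ n ∈ Finset.range (M+1),
          (n.choose k : ℝ) * ε ^ (n-k) * ((m.choose n : ℝ) * (-ε) ^ (m-n) * p m) :=
        Finset.sum_comm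
    _ = ∑ m ∈ Finset.range (M+1), (if m = k then 1 else 0) * p m := by
        apply Finset.sum_congr rfl
        intro m hm
        rw [Finset.mem_range] at hm
        rw [← key_identity ε M k m (by omega), Finset.sum_mul]
        apply Finset.sum_congr rfl
        intro n _
        ring
    _ = p k := by
        by_cases hk : k ≤ M
        · rw [Finset.sum_eq_single k]
          · rw [if_pos rfl, one_mul]
          · intro m _ hmk
            rw [if_neg hmk, zero_mul]
          · intro hk'
            exact absurd (Finset.mem_range.2 (by omega : k < M+1)) hk'
        · rw [Finset.sum_eq_zero, (hzero k (by omega)).symm]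
          intro m hm
          rw [Finset.mem_range] at hm
          rw [if_neg (by omega), zero_mul]

/-- for `X` with bounded support, `ρ(X) = 1` iff the support of `X`
contains a hole. -/
theorem stmt_17 (p : ℕ → ℝ) (hp : IsPMF p) (hb : ∃ N : ℕ, ∀ k, N < k → p k = 0) :
    rho p = 1 ↔ ∃ n : ℕ, 1 ≤ n ∧ 0 < p n ∧ p (n - 1) = 0 := by
  have hmem1 : (1:ℝ) ∈ {α : ℝ | α ∈ Set.Icc (0:ℝ) 1 ∧ MemM α p} :=
    ⟨⟨zero_le_one, le_refl 1⟩, p, hp, fun k => (thin_one_eq p k).symm⟩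
  have hbdd : BddBelow {α : ℝ | α ∈ Set.Icc (0:ℝ) 1 ∧ MemM α p} :=
    ⟨0, fun x hx => hx.1.1⟩
  constructor
  · intro hρ
    by_contra hno
    push_neg at hno
    -- hno : ∀ n, 1 ≤ n → 0 < p n → p (n-1) ≠ 0
    obtain ⟨N, hN⟩ := hb
    -- find the maximal support point M
    have hSne : ((Finset.range (N+1)).filter fun k => p k ≠ 0).Nonempty := by
      by_contra hc
      rw [Finset.not_nonempty_iff_eq_empty, Finset.filter_eq_empty_iff] at hc
      have hall : ∀ k, p k = 0 := by
        intro k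
        by_cases hk : k ≤ N
        · have := hc (Finset.mem_range.2 (by omega : k < N+1))
          simpa using this
        · exact hN k (by omega)
      have : (0:ℝ) = 1 := hasSum_zero.unique (by rw [show (fun _ : ℕ => (0:ℝ)) = p from (funext fun k => (hall k).symm)]; exact hp.2)
      norm_num at this
    set M : ℕ := (((Finset.range (N+1)).filter fun k => p k ≠ 0).max' hSne) with hM
    have hMmem := Finset.max'_mem _ hSne
    rw [Finset.mem_filter] at hMmem
    have hpM : 0 < p M := lt_of_le_of_ne (hp.1 M) (Ne.symm hMmem.2)
    have hzero : ∀ k, M < k → p k = 0 := by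
      intro k hk
      by_contra hpk
      by_cases hkN : k ≤ N
      · have : k ∈ (Finset.range (N+1)).filter fun k => p k ≠ 0 :=
          Finset.mem_filter.2 ⟨Finset.mem_range.2 (by omega), hpk⟩
        have := Finset.le_max' _ k this
        omega
      · exact hpk (hN k (by omega))
    have hpos : ∀ k, k ≤ M → 0 < p k := by
      have key : ∀ j, j ≤ M → 0 < p (M - j) := by
        intro j
        induction j with
        | zero => intro _; simpa using hpM
        | succ i ih =>
          intro hij
          have h1 : 0 < p (M - i) := ih (by omega)
          have h2 : 1 ≤ M - i := by omega
          have h3 := hno (M - i) h2 h1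
          have h4 : 0 < p (M - i - 1) := lt_of_le_of_ne (hp.1 _) (Ne.symm h3)
          have h5 : M - i - 1 = M - (i+1) := by omega
          rwa [h5] at h4
      intro k hk
      have := key (M - k) (by omega)
      have h6 : M - (M - k) = k := by omega
      rwa [h6] at this
    obtain ⟨α, h0, h1, hmemα⟩ := memM_of_full p hp M hpos hzero
    have : rho p ≤ α := csInf_le hbdd ⟨⟨h0, h1.le⟩, hmemα⟩
    rw [hρ] at this
    linarith
  · rintro ⟨n, hn, hpn, hpn1⟩
    apply le_antisymm
    · exact csInf_le hbdd hmem1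
    · apply le_csInf ⟨1, hmem1⟩
      intro β hβ
      by_contra hc
      push_neg at hc
      exact not_memM_of_hole n hn hpn hpn1 hβ.1.1 hc hβ.2
end
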